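/- arXiv:1709.01024 — 8 statements merged into one kernel-verified Lean document; each statement's English description precedes it below -/
import Mathlib

section
/- Suppose θ' ≿_{s'} θ'', and suppose it is not the case that s' is rationally strictly dominant for both θ' and θ'', and not the case that s' is rationally strictly dominated for both θ' and θ''. Then θ'' ≿_{s'} θ' fails. -/
open scoped Classical
open Finset Filter

noncomputable section

/-- `p` is a probability distribution on the finite type `X`. -/
def IsDist {X : Type*} [Fintype X] (p : X → ℝ) : Prop :=
  (∀ x, 0 ≤ p x) ∧ ∑ x, p x = 1

variable {Θ S A : Type*} [Fintype Θ] [Fintype S] [Fintype A]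

/-- Sender's expected payoff `u₁(θ, s, π₂(·|s))` from signal `s` when the receiver plays `π₂`. -/
def u1R (u₁ : Θ → S → A → ℝ) (π₂ : S → A → ℝ) (θ : Θ) (s : S) : ℝ :=
  ∑ a, π₂ s a * u₁ θ s a

/-- Receiver's expected payoff of action `a` after signal `s` under belief `p`. -/
def expU2 (u₂ : Θ → S → A → ℝ) (p : Θ → ℝ) (s : S) (a : A) : ℝ :=
  ∑ θ, p θ * u₂ θ s a

/-- `BR(p, s)`: pure best responses to belief `p` after signal `s`. -/
def BRb (u₂ : Θ → S → A → ℝ) (p : Θ → ℝ) (s : S) : Set A :=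
  {a | ∀ a', expU2 u₂ p s a' ≤ expU2 u₂ p s a}

/-- `A_s^BR`: actions that best respond to some belief after `s`. -/
def ABR (u₂ : Θ → S → A → ℝ) (s : S) : Set A :=
  {a | ∃ p, IsDist p ∧ a ∈ BRb u₂ p s}

/-- Membership in `Π₂•`: a receiver behavior strategy supported on `A_s^BR` after every `s`. -/
def Rational2 (u₂ : Θ → S → A → ℝ) (π₂ : S → A → ℝ) : Prop :=
  (∀ s, IsDist (π₂ s)) ∧ ∀ s a, π₂ s a ≠ 0 → a ∈ ABR u₂ s

/-- `u₁(θ,s,π₂(·|s)) ≥ max_{s' ≠ s} u₁(θ,s',π₂(·|s'))`. -/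
def WeakBest (u₁ : Θ → S → A → ℝ) (π₂ : S → A → ℝ) (θ : Θ) (s : S) : Prop :=
  ∀ s', s' ≠ s → u1R u₁ π₂ θ s' ≤ u1R u₁ π₂ θ s

/-- `u₁(θ,s,π₂(·|s)) > max_{s' ≠ s} u₁(θ,s',π₂(·|s'))`. -/
def StrictBest (u₁ : Θ → S → A → ℝ) (π₂ : S → A → ℝ) (θ : Θ) (s : S) : Prop :=
  ∀ s', s' ≠ s → u1R u₁ π₂ θ s' < u1R u₁ π₂ θ s

/-- `θ' ≿_s θ''`: `s` is more rationally-compatible with `θ'` than with `θ''`. -/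
def MoreCompat (u₁ u₂ : Θ → S → A → ℝ) (s : S) (θ' θ'' : Θ) : Prop :=
  ∀ π₂, Rational2 u₂ π₂ → WeakBest u₁ π₂ θ'' s → StrictBest u₁ π₂ θ' s

/-- `s` maximizes `s' ↦ u₁(θ, s', π₂(·|s'))`. -/
def GlobalBest (u₁ : Θ → S → A → ℝ) (π₂ : S → A → ℝ) (θ : Θ) (s : S) : Prop :=
  ∀ s', u1R u₁ π₂ θ s' ≤ u1R u₁ π₂ θ s

/-- `S_θ`: signals that best respond to some (not necessarily rational) receiver strategy. -/
def Sθ (u₁ : Θ → S → A → ℝ) (θ : Θ) : Set S :=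
  {s | ∃ π₂ : S → A → ℝ, (∀ s', IsDist (π₂ s')) ∧ GlobalBest u₁ π₂ θ s}

/-- `Θ_s`: types for which `s` is not dominated. -/
def Θtypes (u₁ : Θ → S → A → ℝ) (s : S) : Set Θ := {θ | s ∈ Sθ u₁ θ}

/-- Membership in `Π₁•`. -/
def Rational1 (u₁ : Θ → S → A → ℝ) (π₁ : Θ → S → ℝ) : Prop :=
  (∀ θ, IsDist (π₁ θ)) ∧ ∀ θ s, π₁ θ s ≠ 0 → s ∈ Sθ u₁ θ

/-- Nash equilibrium of the signaling game. -/
def NashEq (lam : Θ → ℝ) (u₁ u₂ : Θ → S → A → ℝ)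
    (π₁ : Θ → S → ℝ) (π₂ : S → A → ℝ) : Prop :=
  (∀ θ, IsDist (π₁ θ)) ∧ (∀ s, IsDist (π₂ s)) ∧
  (∀ θ s, π₁ θ s ≠ 0 → GlobalBest u₁ π₂ θ s) ∧
  (∀ s, (∃ θ, π₁ θ s ≠ 0) → ∀ a, π₂ s a ≠ 0 →
    ∀ a', ∑ θ, lam θ * π₁ θ s * u₂ θ s a' ≤ ∑ θ, lam θ * π₁ θ s * u₂ θ s a)

/-- Equilibrium expected payoff `E_π[u₁ | θ]`. -/
def eqPayoff (u₁ : Θ → S → A → ℝ) (π₁ : Θ → S → ℝ) (π₂ : S → A → ℝ) (θ : Θ) : ℝ :=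
  ∑ s, π₁ θ s * u1R u₁ π₂ θ s

/-- `s` is off the path of play of `π₁`. -/
def OffPath (π₁ : Θ → S → ℝ) (s : S) : Prop := ∀ θ, π₁ θ s = 0

/-- `J̃(s, π)`: types for which some best response to `s` weakly improves on the equilibrium. -/
def Jt (u₁ u₂ : Θ → S → A → ℝ) (π₁ : Θ → S → ℝ) (π₂ : S → A → ℝ) (s : S) : Set Θ :=
  {θ | ∃ a ∈ ABR u₂ s, eqPayoff u₁ π₁ π₂ θ ≤ u₁ θ s a}

/-- The odds-ratio condition defining `P_{θ'▷θ''}`. -/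
def OddsLe (lam : Θ → ℝ) (θ' θ'' : Θ) (p : Θ → ℝ) : Prop :=
  p θ'' * lam θ' ≤ lam θ'' * p θ'

/-- `Δ(T)`: beliefs supported on `T`. -/
def DeltaOn {Θ : Type*} [Fintype Θ] (T : Set Θ) : Set (Θ → ℝ) :=
  {p | IsDist p ∧ ∀ θ ∉ T, p θ = 0}

/-- `P̃(s, π)`: rationality-compatible beliefs at profile `π`. -/
def Pt (lam : Θ → ℝ) (u₁ u₂ : Θ → S → A → ℝ) (π₁ : Θ → S → ℝ) (π₂ : S → A → ℝ)
    (s : S) : Set (Θ → ℝ) :=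
  if (Jt u₁ u₂ π₁ π₂ s).Nonempty then
    DeltaOn (Jt u₁ u₂ π₁ π₂ s) ∩
      {p | ∀ θ' θ'', MoreCompat u₁ u₂ s θ' θ'' → OddsLe lam θ' θ'' p}
  else DeltaOn (Θtypes u₁ s)

/-- Rationality-compatible equilibrium. -/
def RCE (lam : Θ → ℝ) (u₁ u₂ : Θ → S → A → ℝ)
    (π₁ : Θ → S → ℝ) (π₂ : S → A → ℝ) : Prop :=
  NashEq lam u₁ u₂ π₁ π₂ ∧
  ∀ s a, π₂ s a ≠ 0 → ∃ p ∈ Pt lam u₁ u₂ π₁ π₂ s, a ∈ BRb u₂ p s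

/-- `P̂(s)`: uniformly rationality-compatible beliefs. -/
def Ph (lam : Θ → ℝ) (u₁ u₂ : Θ → S → A → ℝ) (s : S) : Set (Θ → ℝ) :=
  DeltaOn (Θtypes u₁ s) ∩
    {p | ∀ θ' θ'', MoreCompat u₁ u₂ s θ' θ'' → OddsLe lam θ' θ'' p}

/-- Uniform rationality-compatible equilibrium. -/
def URCE (lam : Θ → ℝ) (u₁ u₂ : Θ → S → A → ℝ)
    (π₁ : Θ → S → ℝ) (π₂ : S → A → ℝ) : Prop :=
  NashEq lam u₁ u₂ π₁ π₂ ∧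
  ∀ θ s, OffPath π₁ s → ∀ a, (∃ p ∈ Ph lam u₁ u₂ s, a ∈ BRb u₂ p s) →
    u₁ θ s a ≤ eqPayoff u₁ π₁ π₂ θ

/-- Receiver's expected payoff of a mixed action `α` after `s` under belief `p`. -/
def expU2m (u₂ : Θ → S → A → ℝ) (p : Θ → ℝ) (s : S) (α : A → ℝ) : ℝ :=
  ∑ θ, p θ * ∑ a, α a * u₂ θ s a

/-- `MBR(p, s)`: mixed best responses to belief `p` after `s`. -/
def MBRb (u₂ : Θ → S → A → ℝ) (p : Θ → ℝ) (s : S) : Set (A → ℝ) :=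
  {α | IsDist α ∧ ∀ α', IsDist α' → expU2m u₂ p s α' ≤ expU2m u₂ p s α}

/-- `MBR(s)`. -/
def MBR (u₂ : Θ → S → A → ℝ) (s : S) : Set (A → ℝ) :=
  {α | ∃ p, IsDist p ∧ α ∈ MBRb u₂ p s}

/-- `u₁(θ, s, α)` for a mixed action `α`. -/
def u1m (u₁ : Θ → S → A → ℝ) (θ : Θ) (s : S) (α : A → ℝ) : ℝ :=
  ∑ a, α a * u₁ θ s a

/-- `D(θ, s; π)`. -/
def Dset (u₁ u₂ : Θ → S → A → ℝ) (π₁ : Θ → S → ℝ) (π₂ : S → A → ℝ)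
    (θ : Θ) (s : S) : Set (A → ℝ) :=
  {α | α ∈ MBR u₂ s ∧ eqPayoff u₁ π₁ π₂ θ < u1m u₁ θ s α}

/-- `D°(θ, s; π)`. -/
def D0set (u₁ u₂ : Θ → S → A → ℝ) (π₁ : Θ → S → ℝ) (π₂ : S → A → ℝ)
    (θ : Θ) (s : S) : Set (A → ℝ) :=
  {α | α ∈ MBR u₂ s ∧ eqPayoff u₁ π₁ π₂ θ = u1m u₁ θ s α}

/-- `s` is rationally strictly dominant for `θ`. -/
def RSDominant (u₁ u₂ : Θ → S → A → ℝ) (θ : Θ) (s : S) : Prop :=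
  ∀ π₂, Rational2 u₂ π₂ → StrictBest u₁ π₂ θ s

/-- `s` is rationally strictly dominated for `θ`. -/
def RSDominated (u₁ u₂ : Θ → S → A → ℝ) (θ : Θ) (s : S) : Prop :=
  ∀ π₂, Rational2 u₂ π₂ → ∃ s', s' ≠ s ∧ u1R u₁ π₂ θ s < u1R u₁ π₂ θ s'


lemma u1R_mix (u₁ : Θ → S → A → ℝ) (πg πb : S → A → ℝ) (t : ℝ) (θ : Θ) (s : S) :
    u1R u₁ (fun s a => (1 - t) * πg s a + t * πb s a) θ s
      = (1 - t) * u1R u₁ πg θ s + t * u1R u₁ πb θ s := by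
  simp only [u1R, Finset.mul_sum, ← Finset.sum_add_distrib]
  exact Finset.sum_congr rfl fun a _ => by ring

lemma rational2_mix (u₂ : Θ → S → A → ℝ) (πg πb : S → A → ℝ)
    (hg : Rational2 u₂ πg) (hb : Rational2 u₂ πb) {t : ℝ} (h0 : 0 ≤ t) (h1 : t ≤ 1) :
    Rational2 u₂ (fun s a => (1 - t) * πg s a + t * πb s a) := by
  refine ⟨fun s => ⟨fun a => ?_, ?_⟩, fun s a hne => ?_⟩
  · have h1' := (hg.1 s).1 a
    have h2' := (hb.1 s).1 a
    have : (0:ℝ) ≤ 1 - t := by linarith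
    positivity
  · rw [Finset.sum_add_distrib, ← Finset.mul_sum, ← Finset.mul_sum, (hg.1 s).2, (hb.1 s).2]
    ring
  · by_cases hga : πg s a = 0
    · by_cases hba : πb s a = 0
      · simp [hga, hba] at hne
      · exact hb.2 s a hba
    · exact hg.2 s a hga

/-- except in the two degenerate cases, `≿_{s'}` is asymmetric. -/
theorem moreCompat_asymm [Nonempty Θ] [Nonempty A] (hS : 1 < Fintype.card S)
    (lam : Θ → ℝ) (hpos : ∀ θ, 0 < lam θ) (hsum : ∑ θ, lam θ = 1)
    (u₁ u₂ : Θ → S → A → ℝ) (s' : S) (θ' θ'' : Θ)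
    (h : MoreCompat u₁ u₂ s' θ' θ'')
    (hnotdominant : ¬ (RSDominant u₁ u₂ θ' s' ∧ RSDominant u₁ u₂ θ'' s'))
    (hnotdominated : ¬ (RSDominated u₁ u₂ θ' s' ∧ RSDominated u₁ u₂ θ'' s')) :
    ¬ MoreCompat u₁ u₂ s' θ'' θ' := by
  intro h2
  -- Dichotomy: every rational strategy is "good" or "bad"
  have dich : ∀ π₂, Rational2 u₂ π₂ →
      (StrictBest u₁ π₂ θ' s' ∧ StrictBest u₁ π₂ θ'' s') ∨
      (¬ WeakBest u₁ π₂ θ' s' ∧ ¬ WeakBest u₁ π₂ θ'' s') := by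
    intro π₂ hr
    by_cases hw'' : WeakBest u₁ π₂ θ'' s'
    · have hb' := h π₂ hr hw''
      exact Or.inl ⟨hb', h2 π₂ hr fun s hs => le_of_lt (hb' s hs)⟩
    · by_cases hw' : WeakBest u₁ π₂ θ' s'
      · have hb'' := h2 π₂ hr hw'
        exact Or.inl ⟨h π₂ hr fun s hs => le_of_lt (hb'' s hs), hb''⟩
      · exact Or.inr ⟨hw', hw''⟩
  -- a good strategy exists
  obtain ⟨πg, hgr, hgood⟩ :
      ∃ π₂, Rational2 u₂ π₂ ∧ StrictBest u₁ π₂ θ' s' ∧ StrictBest u₁ π₂ θ'' s' := by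
    rcases not_and_or.1 hnotdominated with hd | hd <;>
    · simp only [RSDominated, not_forall] at hd
      obtain ⟨π₂, hr, hnd⟩ := hd
      push_neg at hnd
      refine ⟨π₂, hr, ?_⟩
      rcases dich π₂ hr with hgood | ⟨hb1, hb2⟩
      · exact hgood
      · exact absurd hnd (by assumption)
  -- a bad strategy exists
  obtain ⟨πb, hbr, hbad1, hbad2⟩ :
      ∃ π₂, Rational2 u₂ π₂ ∧ ¬ WeakBest u₁ π₂ θ' s' ∧ ¬ WeakBest u₁ π₂ θ'' s' := by
    rcases not_and_or.1 hnotdominant with hd | hd <;>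
    · simp only [RSDominant, not_forall] at hd
      obtain ⟨π₂, hr, hnd⟩ := hd
      rcases dich π₂ hr with hgood' | hbad
      · exact absurd (by tauto) hnd
      · exact ⟨π₂, hr, hbad⟩
  -- set up the interpolation
  classical
  set D : Finset S := Finset.univ.filter (· ≠ s') with hD
  have hmemD : ∀ s : S, s ∈ D ↔ s ≠ s' := by
    intro s; simp [hD]
  have hDne : D.Nonempty := by
    obtain ⟨s, hs⟩ := Fintype.exists_ne_of_one_lt_card hS s'
    exact ⟨s, (hmemD s).2 hs⟩
  set cg : S → ℝ := fun s => u1R u₁ πg θ' s' - u1R u₁ πg θ' s with hcg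
  set cb : S → ℝ := fun s => u1R u₁ πb θ' s' - u1R u₁ πb θ' s with hcb
  set g : S → ℝ → ℝ := fun s t => (1 - t) * cg s + t * cb s with hg
  set F : ℝ → ℝ := fun t => D.inf' hDne (fun s => g s t) with hF
  have hFcont : Continuous F :=
    Continuous.finset_inf'_apply hDne (fun s _ => by
      simp only [hg]; fun_prop)
  have hF0 : 0 < F 0 := by
    show 0 < D.inf' hDne (fun s => g s 0)
    refine (Finset.lt_inf'_iff _).2 fun s hs => ?_
    have := hgood.1 s ((hmemD s).1 hs)
    simp only [hg, hcg]
    nlinarith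
  have hF1 : F 1 < 0 := by
    simp only [WeakBest, not_forall, not_le] at hbad1
    obtain ⟨s₀, hs₀ne, hs₀⟩ := hbad1
    have hle : F 1 ≤ g s₀ 1 := Finset.inf'_le _ ((hmemD s₀).2 hs₀ne)
    simp only [hg, hcb] at hle
    nlinarith
  obtain ⟨t, ht, hFt⟩ : ∃ t ∈ Set.Icc (0:ℝ) 1, F t = 0 := by
    have := intermediate_value_Icc' (zero_le_one (α := ℝ)) hFcont.continuousOn
    obtain ⟨t, ht, hFt⟩ := this ⟨le_of_lt hF1, le_of_lt hF0⟩
    exact ⟨t, ht, hFt⟩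
  set π : S → A → ℝ := fun s a => (1 - t) * πg s a + t * πb s a with hπ
  have hrat : Rational2 u₂ π := rational2_mix u₂ πg πb hgr hbr ht.1 ht.2
  have hval : ∀ s, u1R u₁ π θ' s' - u1R u₁ π θ' s = g s t := by
    intro s
    simp only [hπ, u1R_mix, hg, hcg, hcb]
    ring
  have hweak : WeakBest u₁ π θ' s' := by
    intro s hs
    have h1 : F t ≤ g s t := Finset.inf'_le _ ((hmemD s).2 hs)
    have := hval s
    rw [hFt] at h1
    linarith
  obtain ⟨s₀, hs₀D, hs₀⟩ := Finset.exists_mem_eq_inf' hDne (fun s => g s t)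
  have hstrict : StrictBest u₁ π θ' s' := by
    have hb'' := h2 π hrat hweak
    exact h π hrat fun s hs => le_of_lt (hb'' s hs)
  have hlt := hstrict s₀ ((hmemD s₀).1 hs₀D)
  have heq : u1R u₁ π θ' s' - u1R u₁ π θ' s₀ = 0 := by
    rw [hval s₀, ← hs₀]; exact hFt
  linarith

end
end

section
/- Let π* be a uniform rationality-compatible equilibrium (uRCE), and assume P̃(s,π*) is nonempty for every off-path signal s. Then π* is path-equivalent to a rationality-compatible equilibrium (RCE): there exists an RCE π° with π₁° = π₁* and π₂°(·|s) = π₂*(·|s) for every on-path signal s. -/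
open scoped Classical
open Finset Filter

noncomputable section

variable {Θ S A : Type*} [Fintype Θ] [Fintype S] [Fintype A]

/-! ### Auxiliary lemmas -/

lemma myIsDist_pure (a : A) : IsDist (fun a' => if a' = a then (1:ℝ) else 0) := by
  constructor
  · intro x; dsimp only; split <;> norm_num
  · simp

lemma myU1R_pure (u₁ : Θ → S → A → ℝ) {π₂ : S → A → ℝ} {s : S} {a : A}
    (h : π₂ s = fun a' => if a' = a then (1:ℝ) else 0) (θ : Θ) :
    u1R u₁ π₂ θ s = u₁ θ s a := by
  simp [u1R, h, ite_mul]

lemma myU1R_le_eqPayoff {lam : Θ → ℝ} {u₁ u₂ : Θ → S → A → ℝ} {π₁ : Θ → S → ℝ}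
    {π₂ : S → A → ℝ} (hNash : NashEq lam u₁ u₂ π₁ π₂) (θ : Θ) (s : S) :
    u1R u₁ π₂ θ s ≤ eqPayoff u₁ π₁ π₂ θ := by
  obtain ⟨hπ₁d, _, hSopt, _⟩ := hNash
  have h2 : u1R u₁ π₂ θ s = ∑ t, π₁ θ t * u1R u₁ π₂ θ s := by
    rw [← Finset.sum_mul, (hπ₁d θ).2, one_mul]
  rw [h2]
  simp only [eqPayoff]
  refine Finset.sum_le_sum fun t _ => ?_
  by_cases ht : π₁ θ t = 0
  · simp [ht]
  · exact mul_le_mul_of_nonneg_left (hSopt θ t ht s) ((hπ₁d θ).1 t)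

lemma myEqPayoff_eq {lam : Θ → ℝ} {u₁ u₂ : Θ → S → A → ℝ} {π₁ : Θ → S → ℝ}
    {π₂ : S → A → ℝ} (hNash : NashEq lam u₁ u₂ π₁ π₂) {θ : Θ} {s : S}
    (hs : π₁ θ s ≠ 0) : eqPayoff u₁ π₁ π₂ θ = u1R u₁ π₂ θ s := by
  refine le_antisymm ?_ (myU1R_le_eqPayoff hNash θ s)
  obtain ⟨hπ₁d, _, hSopt, _⟩ := hNash
  have hg := hSopt θ s hs
  have h2 : u1R u₁ π₂ θ s = ∑ t, π₁ θ t * u1R u₁ π₂ θ s := by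
    rw [← Finset.sum_mul, (hπ₁d θ).2, one_mul]
  rw [h2]
  simp only [eqPayoff]
  exact Finset.sum_le_sum fun t _ => mul_le_mul_of_nonneg_left (hg t) ((hπ₁d θ).1 t)

lemma myIsDist_Pt {lam : Θ → ℝ} {u₁ u₂ : Θ → S → A → ℝ} {π₁ : Θ → S → ℝ}
    {π₂ : S → A → ℝ} {s : S} {p : Θ → ℝ} (hp : p ∈ Pt lam u₁ u₂ π₁ π₂ s) : IsDist p := by
  unfold Pt at hp
  split_ifs at hp with hJ
  · exact hp.1.1
  · exact hp.1

lemma myJt_sub [Nonempty A] {lam : Θ → ℝ} {u₁ u₂ : Θ → S → A → ℝ} {π₁ : Θ → S → ℝ}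
    {π₂ : S → A → ℝ} (hNash : NashEq lam u₁ u₂ π₁ π₂) (s : S) :
    Jt u₁ u₂ π₁ π₂ s ⊆ Θtypes u₁ s := by
  rintro θ ⟨a, _, hge⟩
  have hex : ∀ s' : S, ∃ b : A, ∀ a' : A, u₁ θ s' b ≤ u₁ θ s' a' := by
    intro s'
    obtain ⟨b, _, hb⟩ := Finset.exists_min_image Finset.univ (u₁ θ s')
      ⟨Classical.arbitrary A, Finset.mem_univ _⟩
    exact ⟨b, fun a' => hb a' (Finset.mem_univ a')⟩
  choose amin hamin using hex
  refine ⟨fun s' => if s' = s then (fun a' => if a' = a then (1:ℝ) else 0)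
      else (fun a' => if a' = amin s' then (1:ℝ) else 0), fun s' => ?_, fun s' => ?_⟩
  · dsimp only; split_ifs <;> exact myIsDist_pure _
  · have h2 : u1R u₁ (fun s' => if s' = s then (fun a' => if a' = a then (1:ℝ) else 0)
        else (fun a' => if a' = amin s' then (1:ℝ) else 0)) θ s = u₁ θ s a :=
      myU1R_pure u₁ (by simp) θ
    by_cases h' : s' = s
    · subst h'; exact le_refl _
    · have h1 : u1R u₁ (fun s' => if s' = s then (fun a' => if a' = a then (1:ℝ) else 0)
          else (fun a' => if a' = amin s' then (1:ℝ) else 0)) θ s' = u₁ θ s' (amin s') :=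
        myU1R_pure u₁ (by simp [h']) θ
      rw [h1, h2]
      have hd := hNash.2.1 s'
      have hmin : u₁ θ s' (amin s') ≤ u1R u₁ π₂ θ s' := by
        calc u₁ θ s' (amin s') = ∑ a', π₂ s' a' * u₁ θ s' (amin s') := by
              rw [← Finset.sum_mul, hd.2, one_mul]
          _ ≤ ∑ a', π₂ s' a' * u₁ θ s' a' :=
              Finset.sum_le_sum fun a' _ =>
                mul_le_mul_of_nonneg_left (hamin s' a') (hd.1 a')
          _ = u1R u₁ π₂ θ s' := rfl
      calc u₁ θ s' (amin s') ≤ u1R u₁ π₂ θ s' := hmin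
        _ ≤ eqPayoff u₁ π₁ π₂ θ := myU1R_le_eqPayoff hNash θ s'
        _ ≤ u₁ θ s a := hge

/-- every uRCE (with `P̃(s,π*)` nonempty at every off-path signal) is
path-equivalent to an RCE. -/
theorem uRCE_pathEquivalent_RCE [Nonempty Θ] [Nonempty A] (hS : 1 < Fintype.card S)
    (lam : Θ → ℝ) (hpos : ∀ θ, 0 < lam θ) (hsum : ∑ θ, lam θ = 1)
    (u₁ u₂ : Θ → S → A → ℝ) (π₁ : Θ → S → ℝ) (π₂ : S → A → ℝ)
    (h : URCE lam u₁ u₂ π₁ π₂)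
    (hne : ∀ s, OffPath π₁ s → (Pt lam u₁ u₂ π₁ π₂ s).Nonempty) :
    ∃ π₂' : S → A → ℝ,
      RCE lam u₁ u₂ π₁ π₂' ∧
      ∀ s, (∃ θ, π₁ θ s ≠ 0) → π₂' s = π₂ s := by
  classical
  obtain ⟨hNash, hURCE⟩ := h
  have hπ₁d := hNash.1
  have hπ₂d := hNash.2.1
  have hSopt := hNash.2.2.1
  have hRopt := hNash.2.2.2
  -- off-path beliefs and best responses to them
  set P : S → Θ → ℝ := fun s => if hs : OffPath π₁ s then (hne s hs).choose else fun _ => 0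
    with hPdef
  have hPmem : ∀ s, OffPath π₁ s → P s ∈ Pt lam u₁ u₂ π₁ π₂ s := by
    intro s hs
    simp only [hPdef, dif_pos hs]
    exact (hne s hs).choose_spec
  have hastar0 : ∀ s : S, ∃ a : A, ∀ a', expU2 u₂ (P s) s a' ≤ expU2 u₂ (P s) s a := by
    intro s
    obtain ⟨b, _, hb⟩ := Finset.exists_max_image Finset.univ (expU2 u₂ (P s) s)
      ⟨Classical.arbitrary A, Finset.mem_univ _⟩
    exact ⟨b, fun a' => hb a' (Finset.mem_univ a')⟩
  choose astar hastar using hastar0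
  -- the modified receiver strategy
  set π₂' : S → A → ℝ := fun s => if OffPath π₁ s then
      (fun a' => if a' = astar s then (1:ℝ) else 0) else π₂ s with hπ₂'def
  have hon : ∀ s, ¬ OffPath π₁ s → π₂' s = π₂ s := fun s hs => if_neg hs
  have hoff : ∀ s, OffPath π₁ s →
      π₂' s = fun a' => if a' = astar s then (1:ℝ) else 0 := fun s hs => if_pos hs
  have hu1R : ∀ θ s, ¬ OffPath π₁ s → u1R u₁ π₂' θ s = u1R u₁ π₂ θ s := by
    intro θ s hs; simp only [u1R, hon s hs]
  have heq : ∀ θ, eqPayoff u₁ π₁ π₂' θ = eqPayoff u₁ π₁ π₂ θ := by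
    intro θ
    simp only [eqPayoff]
    refine Finset.sum_congr rfl fun s _ => ?_
    by_cases hz : π₁ θ s = 0
    · simp [hz]
    · rw [hu1R θ s (fun hoffp => hz (hoffp θ))]
  have hPdist : ∀ s, OffPath π₁ s → IsDist (P s) := fun s hs => myIsDist_Pt (hPmem s hs)
  have hastarABR : ∀ s, OffPath π₁ s → astar s ∈ ABR u₂ s :=
    fun s hs => ⟨P s, hPdist s hs, hastar s⟩
  -- Bayesian beliefs at on-path signals
  have hbayes : ∀ s, ¬ OffPath π₁ s →
      ∃ p : Θ → ℝ, IsDist p ∧ (∀ θ, π₁ θ s = 0 → p θ = 0) ∧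
        (∀ a, π₂ s a ≠ 0 → a ∈ BRb u₂ p s) ∧
        (∀ θ' θ'', π₁ θ'' s ≤ π₁ θ' s → OddsLe lam θ' θ'' p) := by
    intro s hs
    have hs' : ∃ θ, π₁ θ s ≠ 0 := by
      simpa only [OffPath, not_forall] using hs
    obtain ⟨θ₀, hθ₀⟩ := hs'
    set Z := ∑ θ, lam θ * π₁ θ s with hZ
    have hZpos : 0 < Z := by
      refine Finset.sum_pos' (fun θ _ => mul_nonneg (hpos θ).le ((hπ₁d θ).1 s))
        ⟨θ₀, Finset.mem_univ _, mul_pos (hpos θ₀) ?_⟩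
      exact lt_of_le_of_ne ((hπ₁d θ₀).1 s) (Ne.symm hθ₀)
    refine ⟨fun θ => lam θ * π₁ θ s / Z, ⟨fun θ =>
        div_nonneg (mul_nonneg (hpos θ).le ((hπ₁d θ).1 s)) hZpos.le, ?_⟩, ?_, ?_, ?_⟩
    · rw [← Finset.sum_div, ← hZ, div_self hZpos.ne']
    · intro θ h0; dsimp only; rw [h0, mul_zero, zero_div]
    · intro a ha a'
      have hr := hRopt s ⟨θ₀, hθ₀⟩ a ha a'
      have e : ∀ b : A, expU2 u₂ (fun θ => lam θ * π₁ θ s / Z) s b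
          = (∑ θ, lam θ * π₁ θ s * u₂ θ s b) / Z := by
        intro b
        simp only [expU2]
        rw [Finset.sum_div]
        exact Finset.sum_congr rfl fun θ _ => by ring
      rw [e, e]
      exact div_le_div_of_nonneg_right hr hZpos.le
    · intro θ' θ'' hmono'
      show lam θ'' * π₁ θ'' s / Z * lam θ' ≤ lam θ'' * (lam θ' * π₁ θ' s / Z)
      have e1 : lam θ'' * π₁ θ'' s / Z * lam θ' = lam θ'' * π₁ θ'' s * lam θ' / Z := by ring
      have e2 : lam θ'' * (lam θ' * π₁ θ' s / Z) = lam θ'' * (lam θ' * π₁ θ' s) / Z := by ring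
      rw [e1, e2]
      refine div_le_div_of_nonneg_right ?_ hZpos.le
      nlinarith [mul_le_mul_of_nonneg_left hmono' (mul_nonneg (hpos θ'').le (hpos θ').le)]
  -- senders of an on-path signal belong to J̃
  have hJtmem : ∀ s, ∀ p : Θ → ℝ, IsDist p → (∀ a, π₂ s a ≠ 0 → a ∈ BRb u₂ p s) →
      ∀ θ, π₁ θ s ≠ 0 → θ ∈ Jt u₁ u₂ π₁ π₂ s := by
    intro s p hpd hBR θ hθ
    have hd := hπ₂d s
    by_contra hnot
    have key : ∀ a, π₂ s a ≠ 0 → u₁ θ s a < eqPayoff u₁ π₁ π₂ θ := by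
      intro a ha
      by_contra hge
      exact hnot ⟨a, ⟨p, hpd, hBR a ha⟩, not_lt.mp hge⟩
    have hlt : u1R u₁ π₂ θ s < eqPayoff u₁ π₁ π₂ θ := by
      have h1 : u1R u₁ π₂ θ s = ∑ a, π₂ s a * u₁ θ s a := rfl
      have h2 : eqPayoff u₁ π₁ π₂ θ = ∑ a, π₂ s a * eqPayoff u₁ π₁ π₂ θ := by
        rw [← Finset.sum_mul, hd.2, one_mul]
      rw [h1, h2]
      obtain ⟨a₀, ha₀⟩ : ∃ a, π₂ s a ≠ 0 := by
        by_contra hall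
        push_neg at hall
        have := hd.2
        simp [hall] at this
      refine Finset.sum_lt_sum (fun a _ => ?_) ⟨a₀, Finset.mem_univ _, ?_⟩
      · by_cases ha : π₂ s a = 0
        · simp [ha]
        · exact mul_le_mul_of_nonneg_left (key a ha).le (hd.1 a)
      · exact mul_lt_mul_of_pos_left (key a₀ ha₀)
          (lt_of_le_of_ne (hd.1 a₀) (Ne.symm ha₀))
    exact absurd (myEqPayoff_eq hNash hθ) (by linarith)
  -- π₂' is rational
  have hrat : Rational2 u₂ π₂' := by
    constructor
    · intro s
      by_cases hs : OffPath π₁ s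
      · rw [hoff s hs]; exact myIsDist_pure _
      · rw [hon s hs]; exact hπ₂d s
    · intro s a ha
      by_cases hs : OffPath π₁ s
      · rw [hoff s hs] at ha
        have haeq : a = astar s := by
          by_contra hne'; simp [hne'] at ha
        rw [haeq]; exact hastarABR s hs
      · rw [hon s hs] at ha
        obtain ⟨p, hpd, _, hBR, _⟩ := hbayes s hs
        exact ⟨p, hpd, hBR a ha⟩
  -- sender optimality under π₂'
  have hSopt' : ∀ θ s₀, π₁ θ s₀ ≠ 0 → GlobalBest u₁ π₂' θ s₀ := by
    intro θ s₀ hθ s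
    have hs₀on : ¬ OffPath π₁ s₀ := fun hh => hθ (hh θ)
    have hR : u1R u₁ π₂' θ s₀ = eqPayoff u₁ π₁ π₂ θ := by
      rw [hu1R θ s₀ hs₀on, ← myEqPayoff_eq hNash hθ]
    rw [hR]
    by_cases hs : OffPath π₁ s
    · have hu : u1R u₁ π₂' θ s = u₁ θ s (astar s) := myU1R_pure u₁ (hoff s hs) θ
      rw [hu]
      have hPm := hPmem s hs
      unfold Pt at hPm
      split_ifs at hPm with hJ
      · have hPh : P s ∈ Ph lam u₁ u₂ s := by
          refine ⟨⟨hPm.1.1, fun θ' hθ' => hPm.1.2 θ'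
            (fun hmem => hθ' (myJt_sub hNash s hmem))⟩, hPm.2⟩
        exact hURCE θ s hs (astar s) ⟨P s, hPh, hastar s⟩
      · have hθJ : θ ∉ Jt u₁ u₂ π₁ π₂ s := fun hmem => hJ ⟨θ, hmem⟩
        by_contra hlt
        exact hθJ ⟨astar s, ⟨P s, hPm.1, hastar s⟩, (not_le.mp hlt).le⟩
    · rw [hu1R θ s hs]
      exact myU1R_le_eqPayoff hNash θ s
  -- compatibility implies monotone play probabilities
  have hmono : ∀ s θ' θ'', MoreCompat u₁ u₂ s θ' θ'' → π₁ θ'' s ≤ π₁ θ' s := by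
    intro s θ' θ'' hmc
    by_cases h0 : π₁ θ'' s = 0
    · rw [h0]; exact (hπ₁d θ').1 s
    · have hwb : WeakBest u₁ π₂' θ'' s := fun s' _ => hSopt' θ'' s h0 s'
      have hsb := hmc π₂' hrat hwb
      have hall : ∀ s', s' ≠ s → π₁ θ' s' = 0 := by
        intro s' hne'
        by_contra hz
        exact absurd (hSopt' θ' s' hz s) (not_le.mpr (hsb s' hne'))
      have h1 : π₁ θ' s = 1 := by
        have hsum1 := (hπ₁d θ').2
        rwa [Fintype.sum_eq_single s hall] at hsum1
      have h2 : π₁ θ'' s ≤ 1 := by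
        rw [← (hπ₁d θ'').2]
        exact Finset.single_le_sum (fun t _ => (hπ₁d θ'').1 t) (Finset.mem_univ s)
      rw [h1]; exact h2
  -- J̃ and P̃ are unchanged by the modification
  have hJt' : ∀ s, Jt u₁ u₂ π₁ π₂' s = Jt u₁ u₂ π₁ π₂ s := by
    intro s
    simp only [Jt, heq]
  have hPt' : ∀ s, Pt lam u₁ u₂ π₁ π₂' s = Pt lam u₁ u₂ π₁ π₂ s := by
    intro s
    unfold Pt
    rw [hJt' s]
  -- assemble
  refine ⟨π₂', ⟨⟨hπ₁d, hrat.1, hSopt', ?_⟩, ?_⟩, fun s hsex => hon s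
    (fun hh => hsex.elim fun θ hθ => hθ (hh θ))⟩
  · -- receiver optimality on path
    intro s hsex a ha a'
    have hson : ¬ OffPath π₁ s := fun hh => hsex.elim fun θ hθ => hθ (hh θ)
    rw [hon s hson] at ha
    exact hRopt s hsex a ha a'
  · -- the RCE belief condition
    intro s a ha
    rw [hPt' s]
    by_cases hs : OffPath π₁ s
    · rw [hoff s hs] at ha
      have haeq : a = astar s := by
        by_contra hne'; simp [hne'] at ha
      rw [haeq]
      exact ⟨P s, hPmem s hs, hastar s⟩
    · rw [hon s hs] at ha
      obtain ⟨p, hpd, hzero, hBR, hodds⟩ := hbayes s hs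
      refine ⟨p, ?_, hBR a ha⟩
      have hJne : (Jt u₁ u₂ π₁ π₂ s).Nonempty := by
        have hs' : ∃ θ, π₁ θ s ≠ 0 := by
          simpa only [OffPath, not_forall] using hs
        obtain ⟨θ₀, hθ₀⟩ := hs'
        exact ⟨θ₀, hJtmem s p hpd hBR θ₀ hθ₀⟩
      unfold Pt
      rw [if_pos hJne]
      refine ⟨⟨hpd, fun θ hθ => ?_⟩, fun θ' θ'' hmc => hodds θ' θ'' (hmono s θ' θ'' hmc)⟩
      by_contra hpz
      exact hθ (hJtmem s p hpd hBR θ (fun h0 => hpz (hzero θ h0)))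

end
end

section
/- Suppose θ' ≿_s θ''. Let π₁ be a sender behavior strategy with π₁(s|θ'') > 0 and π₁(s|θ') < 1. Then for every π₂ ∈ Π₂•, π₁ is not an ex-ante best response to π₂: there exists a sender behavior strategy π₁' with ∑_θ λ(θ)·∑_{s'} π₁'(s'|θ)·u₁(θ,s',π₂(·|s')) > ∑_θ λ(θ)·∑_{s'} π₁(s'|θ)·u₁(θ,s',π₂(·|s')). -/
open scoped Classical
open Finset Filter

noncomputable section

variable {Θ S A : Type*} [Fintype Θ] [Fintype S] [Fintype A]

private lemma improve_aux {Θ S A : Type*} [Fintype Θ] [Fintype S] [Fintype A]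
    (lam : Θ → ℝ) (hpos : ∀ θ, 0 < lam θ)
    (u₁ : Θ → S → A → ℝ) (π₂ : S → A → ℝ)
    (π₁ : Θ → S → ℝ) (hπ₁ : ∀ θ, IsDist (π₁ θ))
    (θ₀ : Θ) (s₀ : S)
    (h : ∑ s', π₁ θ₀ s' * u1R u₁ π₂ θ₀ s' < u1R u₁ π₂ θ₀ s₀) :
    ∃ π₁' : Θ → S → ℝ, (∀ θ, IsDist (π₁' θ)) ∧
      ∑ θ, lam θ * ∑ s', π₁ θ s' * u1R u₁ π₂ θ s'
        < ∑ θ, lam θ * ∑ s', π₁' θ s' * u1R u₁ π₂ θ s' := by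
  refine ⟨Function.update π₁ θ₀ (fun s' => if s' = s₀ then 1 else 0), ?_, ?_⟩
  · intro θ
    by_cases hθ : θ = θ₀
    · rw [hθ, Function.update_self]
      exact ⟨fun x => by dsimp only; split <;> norm_num, by simp⟩
    · rw [Function.update_of_ne hθ]; exact hπ₁ θ
  · have he : ∑ s', (if s' = s₀ then (1:ℝ) else 0) * u1R u₁ π₂ θ₀ s'
        = u1R u₁ π₂ θ₀ s₀ := by simp [ite_mul]
    apply Finset.sum_lt_sum
    · intro θ _
      by_cases hθ : θ = θ₀
      · rw [hθ, Function.update_self]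
        rw [he]
        exact mul_le_mul_of_nonneg_left h.le (hpos θ₀).le
      · rw [Function.update_of_ne hθ]
    · refine ⟨θ₀, Finset.mem_univ _, ?_⟩
      rw [Function.update_self]
      rw [he]
      exact mul_lt_mul_of_pos_left h (hpos θ₀)

/-- if `θ' ≿_s θ''`, any sender strategy playing `s` as `θ''` with positive
probability but not playing `s` surely as `θ'` is not an ex-ante best response to any
`π₂ ∈ Π₂•`. -/
theorem compat_strict_dominance [Nonempty Θ] [Nonempty A] (hS : 1 < Fintype.card S)
    (lam : Θ → ℝ) (hpos : ∀ θ, 0 < lam θ) (hsum : ∑ θ, lam θ = 1)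
    (u₁ u₂ : Θ → S → A → ℝ) (s : S) (θ' θ'' : Θ)
    (hc : MoreCompat u₁ u₂ s θ' θ'')
    (π₁ : Θ → S → ℝ) (hπ₁ : ∀ θ, IsDist (π₁ θ))
    (hpos'' : 0 < π₁ θ'' s) (hlt' : π₁ θ' s < 1)
    (π₂ : S → A → ℝ) (hπ₂ : Rational2 u₂ π₂) :
    ∃ π₁' : Θ → S → ℝ, (∀ θ, IsDist (π₁' θ)) ∧
      ∑ θ, lam θ * ∑ s', π₁ θ s' * u1R u₁ π₂ θ s'
        < ∑ θ, lam θ * ∑ s', π₁' θ s' * u1R u₁ π₂ θ s' := by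
  classical
  by_cases hwb : WeakBest u₁ π₂ θ'' s
  · -- strict best for θ' at s; θ' has mass off s
    have hsb : StrictBest u₁ π₂ θ' s := hc π₂ hπ₂ hwb
    have hmass : ∃ s'' , s'' ≠ s ∧ 0 < π₁ θ' s'' := by
      by_contra hcon
      push_neg at hcon
      have hz : ∀ s'' ≠ s, π₁ θ' s'' = 0 := fun s'' hne =>
        le_antisymm (not_lt.mp fun hlt => absurd hlt (by simpa using hcon s'' hne))
          ((hπ₁ θ').1 s'')
      have : ∑ s', π₁ θ' s' = π₁ θ' s :=
        Finset.sum_eq_single s (fun b _ hb => hz b hb) (by simp)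
      rw [(hπ₁ θ').2] at this
      exact absurd this.symm (ne_of_lt hlt')
    obtain ⟨s'', hne, hpos2⟩ := hmass
    refine improve_aux lam hpos u₁ π₂ π₁ hπ₁ θ' s ?_
    calc ∑ s', π₁ θ' s' * u1R u₁ π₂ θ' s'
        < ∑ s', π₁ θ' s' * u1R u₁ π₂ θ' s := by
          apply Finset.sum_lt_sum
          · intro i _
            by_cases hi : i = s
            · subst hi; exact le_rfl
            · exact mul_le_mul_of_nonneg_left (hsb i hi).le ((hπ₁ θ').1 i)
          · exact ⟨s'', Finset.mem_univ _,
              mul_lt_mul_of_pos_left (hsb s'' hne) hpos2⟩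
      _ = u1R u₁ π₂ θ' s := by rw [← Finset.sum_mul, (hπ₁ θ').2, one_mul]
  · -- θ'' has a strictly better signal than s
    simp only [WeakBest, not_forall] at hwb
    obtain ⟨s₁, hne1, hlt1⟩ := hwb
    push_neg at hlt1
    obtain ⟨s₀, _, hmax⟩ := Finset.exists_max_image Finset.univ
      (u1R u₁ π₂ θ'') ⟨s, Finset.mem_univ s⟩
    have hmax' : ∀ s', u1R u₁ π₂ θ'' s' ≤ u1R u₁ π₂ θ'' s₀ :=
      fun s' => hmax s' (Finset.mem_univ s')
    refine improve_aux lam hpos u₁ π₂ π₁ hπ₁ θ'' s₀ ?_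
    calc ∑ s', π₁ θ'' s' * u1R u₁ π₂ θ'' s'
        < ∑ s', π₁ θ'' s' * u1R u₁ π₂ θ'' s₀ := by
          apply Finset.sum_lt_sum
          · intro i _
            exact mul_le_mul_of_nonneg_left (hmax' i) ((hπ₁ θ'').1 i)
          · exact ⟨s, Finset.mem_univ _,
              mul_lt_mul_of_pos_left (lt_of_lt_of_le hlt1 (hmax' s₁)) hpos''⟩
      _ = u1R u₁ π₂ θ'' s₀ := by rw [← Finset.sum_mul, (hπ₁ θ'').2, one_mul]


end
end

section
/- Every rationality-compatible equilibrium (RCE) passes the Intuitive Criterion: if π* is an RCE, then there exist no type θ and signal s' with J̃(s',π*) ≠ ∅ and E_π*[u₁|θ] < min_{a ∈ BR(Δ(J̃(s',π*)), s')} u₁(θ,s',a). -/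
open scoped Classical
open Finset Filter

noncomputable section

variable {Θ S A : Type*} [Fintype Θ] [Fintype S] [Fintype A]

/-- every RCE passes the Intuitive Criterion. -/
theorem RCE_passes_IntuitiveCriterion [Nonempty Θ] [Nonempty A] (hS : 1 < Fintype.card S)
    (lam : Θ → ℝ) (hpos : ∀ θ, 0 < lam θ) (hsum : ∑ θ, lam θ = 1)
    (u₁ u₂ : Θ → S → A → ℝ) (π₁ : Θ → S → ℝ) (π₂ : S → A → ℝ)
    (h : RCE lam u₁ u₂ π₁ π₂) :
    ¬ ∃ (θ : Θ) (s' : S), (Jt u₁ u₂ π₁ π₂ s').Nonempty ∧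
      ∀ a : A, (∃ p ∈ DeltaOn (Jt u₁ u₂ π₁ π₂ s'), a ∈ BRb u₂ p s') →
        eqPayoff u₁ π₁ π₂ θ < u₁ θ s' a := by
  rintro ⟨θ, s', hJ, hmin⟩
  obtain ⟨hNash, hRC⟩ := h
  obtain ⟨hπ1, hπ2, hGB, _⟩ := hNash
  have key : ∀ a, π₂ s' a ≠ 0 → eqPayoff u₁ π₁ π₂ θ < u₁ θ s' a := by
    intro a ha
    obtain ⟨p, hp, hbr⟩ := hRC s' a ha
    refine hmin a ⟨p, ?_, hbr⟩
    rw [Pt, if_pos hJ] at hp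
    exact hp.1
  have hd := hπ2 s'
  have hlt : eqPayoff u₁ π₁ π₂ θ < u1R u₁ π₂ θ s' := by
    have heq : eqPayoff u₁ π₁ π₂ θ = ∑ a, π₂ s' a * eqPayoff u₁ π₁ π₂ θ := by
      rw [← Finset.sum_mul, hd.2, one_mul]
    rw [heq, u1R]
    apply Finset.sum_lt_sum
    · intro a _
      rcases eq_or_ne (π₂ s' a) 0 with h0 | h0
      · simp [h0]
      · exact le_of_lt (mul_lt_mul_of_pos_left (key a h0)
          (lt_of_le_of_ne (hd.1 a) (Ne.symm h0)))
    · have hex : ∃ a, π₂ s' a ≠ 0 := by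
        by_contra hc
        push_neg at hc
        have h2 := hd.2
        simp [hc] at h2
      obtain ⟨a, ha⟩ := hex
      exact ⟨a, Finset.mem_univ a, mul_lt_mul_of_pos_left (key a ha)
        (lt_of_le_of_ne (hd.1 a) (Ne.symm ha))⟩
  have hge : u1R u₁ π₂ θ s' ≤ eqPayoff u₁ π₁ π₂ θ := by
    have hθ := hπ1 θ
    calc u1R u₁ π₂ θ s' = ∑ s, π₁ θ s * u1R u₁ π₂ θ s' := by
          rw [← Finset.sum_mul, hθ.2, one_mul]
      _ ≤ ∑ s, π₁ θ s * u1R u₁ π₂ θ s := by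
          apply Finset.sum_le_sum
          intro s _
          rcases eq_or_ne (π₁ θ s) 0 with h0 | h0
          · simp [h0]
          · exact mul_le_mul_of_nonneg_left (hGB θ s h0 s') (hθ.1 s)
      _ = eqPayoff u₁ π₁ π₂ θ := rfl
  linarith


end
end

section
/- Let π* be a Nash equilibrium such that for every off-path signal s': if J̃(s',π*) ≠ ∅, then every action in the support of π₂*(·|s') is a best response BR(p,s') to some belief p ∈ Δ(Θ) satisfying (i) p(θ) = 0 for every θ ∉ J̃(s',π*) and (ii) p(θ'')·λ(θ') ≤ λ(θ'')·p(θ') for every pair (θ',θ'') with D(θ'',s';π*) ∪ D°(θ'',s';π*) ⊆ D(θ',s';π*); and if J̃(s',π*) = ∅, then every action in the support of π₂*(·|s') is a best response to some belief supported on Θ_{s'}. Then π* is a rationality-compatible equilibrium (RCE). (In particular, every divine equilibrium is an RCE.) -/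
open scoped Classical
open Finset Filter

noncomputable section

variable {Θ S A : Type*} [Fintype Θ] [Fintype S] [Fintype A]

lemma isDist_exists_ne {X : Type*} [Fintype X] {p : X → ℝ} (h : IsDist p) :
    ∃ x, p x ≠ 0 := by
  by_contra h'
  push_neg at h'
  have h2 := h.2
  rw [Finset.sum_eq_zero (fun x _ => h' x)] at h2
  norm_num at h2

lemma isDist_le_one {X : Type*} [Fintype X] {p : X → ℝ} (h : IsDist p) (x : X) :
    p x ≤ 1 := by
  rw [← h.2]
  exact Finset.single_le_sum (fun i _ => h.1 i) (Finset.mem_univ x)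

lemma exists_ge_avg {X : Type*} [Fintype X] {w v : X → ℝ} (h : IsDist w) :
    ∃ x, w x ≠ 0 ∧ ∑ y, w y * v y ≤ v x := by
  by_contra hc
  push_neg at hc
  have hlt : ∑ y, w y * v y < ∑ y, w y * (∑ y, w y * v y) := by
    obtain ⟨x₀, hx₀⟩ := isDist_exists_ne h
    refine Finset.sum_lt_sum (fun i _ => ?_) ⟨x₀, Finset.mem_univ x₀, ?_⟩
    · by_cases hw : w i = 0
      · simp [hw]
      · exact mul_le_mul_of_nonneg_left (le_of_lt (hc i hw)) (h.1 i)
    · exact mul_lt_mul_of_pos_left (hc x₀ hx₀) (lt_of_le_of_ne (h.1 x₀) (Ne.symm hx₀))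
  rw [← Finset.sum_mul, h.2, one_mul] at hlt
  exact lt_irrefl _ hlt

lemma eqPayoff_eq_onpath (u₁ : Θ → S → A → ℝ) {π₁ : Θ → S → ℝ} {π₂ : S → A → ℝ}
    (hd : ∀ θ, IsDist (π₁ θ)) (hg : ∀ θ s, π₁ θ s ≠ 0 → GlobalBest u₁ π₂ θ s)
    {θ : Θ} {s : S} (hs : π₁ θ s ≠ 0) :
    eqPayoff u₁ π₁ π₂ θ = u1R u₁ π₂ θ s := by
  unfold eqPayoff
  have hval : ∀ s', π₁ θ s' * u1R u₁ π₂ θ s' = π₁ θ s' * u1R u₁ π₂ θ s := by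
    intro s'
    by_cases h : π₁ θ s' = 0
    · simp [h]
    · rw [le_antisymm (hg θ s hs s') (hg θ s' h s)]
  rw [Finset.sum_congr rfl fun s' _ => hval s', ← Finset.sum_mul, (hd θ).2, one_mul]

lemma u1R_le_eqPayoff (u₁ : Θ → S → A → ℝ) {π₁ : Θ → S → ℝ} {π₂ : S → A → ℝ}
    (hd : ∀ θ, IsDist (π₁ θ)) (hg : ∀ θ s, π₁ θ s ≠ 0 → GlobalBest u₁ π₂ θ s)
    (θ : Θ) (t : S) : u1R u₁ π₂ θ t ≤ eqPayoff u₁ π₁ π₂ θ := by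
  obtain ⟨s₀, hs₀⟩ := isDist_exists_ne (hd θ)
  rw [eqPayoff_eq_onpath u₁ hd hg hs₀]
  exact hg θ s₀ hs₀ t

lemma mbr_support [Nonempty A] {u₂ : Θ → S → A → ℝ} {p : Θ → ℝ} {s : S} {α : A → ℝ}
    (hα : α ∈ MBRb u₂ p s) {a : A} (ha : α a ≠ 0) : a ∈ BRb u₂ p s := by
  obtain ⟨a', -, ha'⟩ := Finset.exists_max_image Finset.univ (expU2 u₂ p s)
    Finset.univ_nonempty
  have hmax : ∀ b, expU2 u₂ p s b ≤ expU2 u₂ p s a' := fun b => ha' b (Finset.mem_univ b)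
  have hδ : IsDist (fun b : A => if b = a' then (1:ℝ) else 0) := by
    constructor
    · intro b; by_cases h : b = a' <;> simp [h]
    · simp
  have hδval : expU2m u₂ p s (fun b => if b = a' then (1:ℝ) else 0) = expU2 u₂ p s a' := by
    unfold expU2m expU2
    apply Finset.sum_congr rfl
    intro θ _
    congr 1
    simp
  have hswap : expU2m u₂ p s α = ∑ b, α b * expU2 u₂ p s b := by
    unfold expU2m expU2
    simp_rw [Finset.mul_sum]
    rw [Finset.sum_comm]
    apply Finset.sum_congr rfl
    intro b _
    apply Finset.sum_congr rfl
    intro θ _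
    ring
  have hle1 : expU2 u₂ p s a' ≤ ∑ b, α b * expU2 u₂ p s b := by
    rw [← hδval, ← hswap]; exact hα.2 _ hδ
  have hle2 : ∑ b, α b * expU2 u₂ p s b ≤ ∑ b, α b * expU2 u₂ p s a' := by
    apply Finset.sum_le_sum
    intro b _
    exact mul_le_mul_of_nonneg_left (hmax b) (hα.1.1 b)
  rw [← Finset.sum_mul, hα.1.2, one_mul] at hle2
  have heq : ∑ b, α b * (expU2 u₂ p s a' - expU2 u₂ p s b) = 0 := by
    have : ∑ b, α b * (expU2 u₂ p s a' - expU2 u₂ p s b)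
        = (∑ b, α b * expU2 u₂ p s a') - ∑ b, α b * expU2 u₂ p s b := by
      rw [← Finset.sum_sub_distrib]
      apply Finset.sum_congr rfl
      intro b _; ring
    rw [this, ← Finset.sum_mul, hα.1.2, one_mul]
    linarith
  have hterm : α a * (expU2 u₂ p s a' - expU2 u₂ p s a) = 0 := by
    have := (Finset.sum_eq_zero_iff_of_nonneg (fun b _ =>
      mul_nonneg (hα.1.1 b) (sub_nonneg.2 (hmax b)))).mp heq a (Finset.mem_univ a)
    exact this
  have haa' : expU2 u₂ p s a = expU2 u₂ p s a' := by
    rcases mul_eq_zero.mp hterm with h | h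
    · exact absurd h ha
    · linarith [sub_eq_zero.mp h]
  intro b
  rw [haa']
  exact hmax b

lemma posterior_br {lam : Θ → ℝ} (hpos : ∀ θ, 0 < lam θ) {u₂ : Θ → S → A → ℝ}
    {π₁ : Θ → S → ℝ} {π₂ : S → A → ℝ} (hd1 : ∀ θ, IsDist (π₁ θ))
    (hbr : ∀ s, (∃ θ, π₁ θ s ≠ 0) → ∀ a, π₂ s a ≠ 0 →
      ∀ a', ∑ θ, lam θ * π₁ θ s * u₂ θ s a' ≤ ∑ θ, lam θ * π₁ θ s * u₂ θ s a)
    {s : S} (hon : ∃ θ, π₁ θ s ≠ 0) {a : A} (ha : π₂ s a ≠ 0) :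
    IsDist (fun θ => lam θ * π₁ θ s / ∑ θ', lam θ' * π₁ θ' s) ∧
    a ∈ BRb u₂ (fun θ => lam θ * π₁ θ s / ∑ θ', lam θ' * π₁ θ' s) s := by
  set Z := ∑ θ', lam θ' * π₁ θ' s with hZdef
  obtain ⟨θ₀, hθ₀⟩ := hon
  have hterm : ∀ θ, 0 ≤ lam θ * π₁ θ s :=
    fun θ => mul_nonneg (le_of_lt (hpos θ)) ((hd1 θ).1 s)
  have hZ : 0 < Z := by
    apply Finset.sum_pos' (fun θ _ => hterm θ)
    exact ⟨θ₀, Finset.mem_univ θ₀, mul_pos (hpos θ₀)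
      (lt_of_le_of_ne ((hd1 θ₀).1 s) (Ne.symm hθ₀))⟩
  have hdist : IsDist (fun θ => lam θ * π₁ θ s / Z) := by
    constructor
    · intro θ; exact div_nonneg (hterm θ) (le_of_lt hZ)
    · rw [← Finset.sum_div, div_self (ne_of_gt hZ)]
  refine ⟨hdist, ?_⟩
  intro a'
  have hcalc : ∀ b, expU2 u₂ (fun θ => lam θ * π₁ θ s / Z) s b
      = (∑ θ, lam θ * π₁ θ s * u₂ θ s b) / Z := by
    intro b
    show ∑ θ, lam θ * π₁ θ s / Z * u₂ θ s b = (∑ θ, lam θ * π₁ θ s * u₂ θ s b) / Z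
    rw [Finset.sum_div]
    exact Finset.sum_congr rfl fun θ _ => by ring
  rw [hcalc, hcalc]
  exact (div_le_div_iff_of_pos_right hZ).mpr (hbr s ⟨θ₀, hθ₀⟩ a ha a')

lemma compat_imp_divine [Nonempty A] (u₁ u₂ : Θ → S → A → ℝ)
    {π₁ : Θ → S → ℝ} {π₂ : S → A → ℝ}
    (hd1 : ∀ θ, IsDist (π₁ θ)) (hg : ∀ θ s, π₁ θ s ≠ 0 → GlobalBest u₁ π₂ θ s)
    (hR2 : Rational2 u₂ π₂) {s : S} (hoff : OffPath π₁ s)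
    {θ' θ'' : Θ} (hc : MoreCompat u₁ u₂ s θ' θ'')
    {α : A → ℝ} (hαM : α ∈ MBR u₂ s) (hα : eqPayoff u₁ π₁ π₂ θ'' ≤ u1m u₁ θ'' s α) :
    eqPayoff u₁ π₁ π₂ θ' < u1m u₁ θ' s α := by
  obtain ⟨p, hp, hαp⟩ := hαM
  set π₂' : S → A → ℝ := fun t => if t = s then α else π₂ t with hπ₂'
  have hu1Rs : ∀ θ, u1R u₁ π₂' θ s = u1m u₁ θ s α := by
    intro θ; unfold u1R u1m; simp [π₂']
  have hu1Rne : ∀ θ t, t ≠ s → u1R u₁ π₂' θ t = u1R u₁ π₂ θ t := by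
    intro θ t ht; unfold u1R; simp [π₂', ht]
  have hrat : Rational2 u₂ π₂' := by
    constructor
    · intro t
      by_cases ht : t = s
      · subst ht; simpa [π₂'] using hαp.1
      · simpa [π₂', ht] using hR2.1 t
    · intro t b hb
      by_cases ht : t = s
      · subst ht
        simp only [π₂', if_pos rfl] at hb
        exact ⟨p, hp, mbr_support hαp hb⟩
      · simp only [π₂', if_neg ht] at hb
        exact hR2.2 t b hb
  have hweak : WeakBest u₁ π₂' θ'' s := by
    intro t ht
    rw [hu1Rne _ _ ht, hu1Rs]
    exact le_trans (u1R_le_eqPayoff u₁ hd1 hg θ'' t) hα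
  have hstrict := hc π₂' hrat hweak
  obtain ⟨s₀, hs₀⟩ := isDist_exists_ne (hd1 θ')
  have hs₀ne : s₀ ≠ s := fun h => hs₀ (h ▸ hoff θ')
  calc eqPayoff u₁ π₁ π₂ θ' = u1R u₁ π₂ θ' s₀ := eqPayoff_eq_onpath u₁ hd1 hg hs₀
    _ = u1R u₁ π₂' θ' s₀ := (hu1Rne θ' s₀ hs₀ne).symm
    _ < u1R u₁ π₂' θ' s := hstrict s₀ hs₀ne
    _ = u1m u₁ θ' s α := hu1Rs θ'

/-- a Nash equilibrium whose off-path responses best respond to beliefs that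
put zero weight on equilibrium-dominated types and whose odds ratios respect the inclusion
`D(θ'',s';π*) ∪ D°(θ'',s';π*) ⊆ D(θ',s';π*)` (the divinity restriction) is an RCE. -/
theorem divine_is_RCE [Nonempty Θ] [Nonempty A] (hS : 1 < Fintype.card S)
    (lam : Θ → ℝ) (hpos : ∀ θ, 0 < lam θ) (hsum : ∑ θ, lam θ = 1)
    (u₁ u₂ : Θ → S → A → ℝ) (π₁ : Θ → S → ℝ) (π₂ : S → A → ℝ)
    (hN : NashEq lam u₁ u₂ π₁ π₂)
    (hdiv : ∀ s', OffPath π₁ s' →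
      (((Jt u₁ u₂ π₁ π₂ s').Nonempty →
        ∀ a, π₂ s' a ≠ 0 → ∃ p : Θ → ℝ, IsDist p ∧
          (∀ θ, θ ∉ Jt u₁ u₂ π₁ π₂ s' → p θ = 0) ∧
          (∀ θ' θ'', Dset u₁ u₂ π₁ π₂ θ'' s' ∪ D0set u₁ u₂ π₁ π₂ θ'' s'
              ⊆ Dset u₁ u₂ π₁ π₂ θ' s' →
            p θ'' * lam θ' ≤ lam θ'' * p θ') ∧
          a ∈ BRb u₂ p s') ∧
      (¬ (Jt u₁ u₂ π₁ π₂ s').Nonempty →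
        ∀ a, π₂ s' a ≠ 0 → ∃ p ∈ DeltaOn (Θtypes u₁ s'), a ∈ BRb u₂ p s'))) :
    RCE lam u₁ u₂ π₁ π₂ := by
  obtain ⟨hd1, hd2, hg, hbr⟩ := hN
  -- the equilibrium receiver strategy is rational everywhere
  have hR2 : Rational2 u₂ π₂ := by
    refine ⟨hd2, ?_⟩
    intro s a ha
    by_cases hon : ∃ θ, π₁ θ s ≠ 0
    · obtain ⟨hpd, hpbr⟩ := posterior_br hpos hd1 hbr hon ha
      exact ⟨_, hpd, hpbr⟩
    · have hoff : OffPath π₁ s := by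
        intro θ; by_contra h; exact hon ⟨θ, h⟩
      obtain ⟨h1, h2⟩ := hdiv s hoff
      by_cases hJ : (Jt u₁ u₂ π₁ π₂ s).Nonempty
      · obtain ⟨p, hpd, -, -, hpbr⟩ := h1 hJ a ha
        exact ⟨p, hpd, hpbr⟩
      · obtain ⟨p, hpΔ, hpbr⟩ := h2 hJ a ha
        exact ⟨p, hpΔ.1, hpbr⟩
  refine ⟨⟨hd1, hd2, hg, hbr⟩, ?_⟩
  intro s a ha
  by_cases hon : ∃ θ, π₁ θ s ≠ 0
  · -- on-path case: use the posterior belief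
    obtain ⟨hpd, hpbr⟩ := posterior_br hpos hd1 hbr hon ha
    set Z := ∑ θ', lam θ' * π₁ θ' s with hZdef
    set p : Θ → ℝ := fun θ => lam θ * π₁ θ s / Z with hpdef
    have hJmem : ∀ θ, π₁ θ s ≠ 0 → θ ∈ Jt u₁ u₂ π₁ π₂ s := by
      intro θ hθ
      obtain ⟨a', ha', hval⟩ := exists_ge_avg (w := π₂ s) (v := u₁ θ s) (hd2 s)
      refine ⟨a', hR2.2 s a' ha', ?_⟩
      rw [eqPayoff_eq_onpath u₁ hd1 hg hθ]
      exact hval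
    obtain ⟨θ₀, hθ₀⟩ := hon
    have hJne : (Jt u₁ u₂ π₁ π₂ s).Nonempty := ⟨θ₀, hJmem θ₀ hθ₀⟩
    refine ⟨p, ?_, hpbr⟩
    unfold Pt
    rw [if_pos hJne]
    refine ⟨⟨hpd, ?_⟩, ?_⟩
    · intro θ hθ
      have hπ : π₁ θ s = 0 := by
        by_contra h; exact hθ (hJmem θ h)
      simp [hpdef, hπ]
    · intro θ' θ'' hc
      unfold OddsLe
      by_cases hz : π₁ θ'' s = 0
      · have : p θ'' = 0 := by simp [hpdef, hz]
        rw [this]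
        simp only [zero_mul]
        exact mul_nonneg (le_of_lt (hpos θ'')) (hpd.1 θ')
      · have hweak : WeakBest u₁ π₂ θ'' s := fun t _ => hg θ'' s hz t
        have hstrict := hc π₂ hR2 hweak
        have hone : π₁ θ' s = 1 := by
          have hzero : ∀ t, t ≠ s → π₁ θ' t = 0 := by
            intro t ht
            by_contra h
            exact absurd (hg θ' t h s) (not_le.2 (hstrict t ht))
          have := (hd1 θ').2
          rwa [Finset.sum_eq_single s (fun t _ ht => hzero t ht) (fun h => absurd (Finset.mem_univ s) h)] at this
        have hle : π₁ θ'' s ≤ π₁ θ' s := by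
          rw [hone]; exact isDist_le_one (hd1 θ'') s
        have hZpos : 0 < Z := by
          apply Finset.sum_pos' (fun θ _ => mul_nonneg (le_of_lt (hpos θ)) ((hd1 θ).1 s))
          exact ⟨θ'', Finset.mem_univ θ'', mul_pos (hpos θ'')
            (lt_of_le_of_ne ((hd1 θ'').1 s) (Ne.symm hz))⟩
        have key : lam θ'' * π₁ θ'' s * lam θ' ≤ lam θ'' * (lam θ' * π₁ θ' s) := by
          have h := mul_le_mul_of_nonneg_left hle (mul_nonneg (hpos θ'').le (hpos θ').le)
          nlinarith [h]
        calc p θ'' * lam θ' = (lam θ'' * π₁ θ'' s * lam θ') / Z := by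
              simp [hpdef]; ring
          _ ≤ (lam θ'' * (lam θ' * π₁ θ' s)) / Z := (div_le_div_iff_of_pos_right hZpos).mpr key
          _ = lam θ'' * p θ' := by simp [hpdef]; ring
  · -- off-path case
    have hoff : OffPath π₁ s := by
      intro θ; by_contra h; exact hon ⟨θ, h⟩
    obtain ⟨h1, h2⟩ := hdiv s hoff
    by_cases hJ : (Jt u₁ u₂ π₁ π₂ s).Nonempty
    · obtain ⟨p, hpd, hsupp, hodds, hpbr⟩ := h1 hJ a ha
      refine ⟨p, ?_, hpbr⟩
      unfold Pt
      rw [if_pos hJ]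
      refine ⟨⟨hpd, hsupp⟩, ?_⟩
      intro θ' θ'' hc
      apply hodds
      intro α hα
      rcases hα with ⟨hM, hlt⟩ | ⟨hM, heq⟩
      · exact ⟨hM, compat_imp_divine u₁ u₂ hd1 hg hR2 hoff hc hM (le_of_lt hlt)⟩
      · exact ⟨hM, compat_imp_divine u₁ u₂ hd1 hg hR2 hoff hc hM (le_of_eq heq)⟩
    · obtain ⟨p, hpΔ, hpbr⟩ := h2 hJ a ha
      refine ⟨p, ?_, hpbr⟩
      unfold Pt
      rw [if_neg hJ]
      exact hpΔ

end
end

section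
/- If π* is a Nash equilibrium, then for every signal s, J̃(s,π*) ⊆ Θ_s; consequently, whenever J̃(s,π*) ≠ ∅, P̃(s,π*) ⊆ P̂(s). -/
open scoped Classical
open Finset Filter

noncomputable section

variable {Θ S A : Type*} [Fintype Θ] [Fintype S] [Fintype A]

/-- At a Nash equilibrium, the equilibrium payoff dominates every deviation payoff. -/
lemma eqPayoff_ge (lam : Θ → ℝ) (u₁ u₂ : Θ → S → A → ℝ) (π₁ : Θ → S → ℝ) (π₂ : S → A → ℝ)
    (hN : NashEq lam u₁ u₂ π₁ π₂) (θ : Θ) (s' : S) :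
    u1R u₁ π₂ θ s' ≤ eqPayoff u₁ π₁ π₂ θ := by
  obtain ⟨hd, _, hGB, _⟩ := hN
  obtain ⟨hnn, hsum⟩ := hd θ
  have hex : ∃ s₀, π₁ θ s₀ ≠ 0 := by
    by_contra h
    push_neg at h
    simp [h] at hsum
  obtain ⟨s₀, hs₀⟩ := hex
  have hgb := hGB θ s₀ hs₀
  have heq : eqPayoff u₁ π₁ π₂ θ = u1R u₁ π₂ θ s₀ := by
    have : ∀ s, π₁ θ s * u1R u₁ π₂ θ s = π₁ θ s * u1R u₁ π₂ θ s₀ := by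
      intro s
      by_cases h : π₁ θ s = 0
      · simp [h]
      · have h1 := hGB θ s h s₀
        have h2 := hgb s
        rw [le_antisymm h2 h1]
    rw [eqPayoff, Finset.sum_congr rfl (fun s _ => this s), ← Finset.sum_mul, hsum, one_mul]
  rw [heq]
  exact hgb s'

theorem Jt_subset_Θtypes [Nonempty Θ] [Nonempty A]
    (lam : Θ → ℝ) (u₁ u₂ : Θ → S → A → ℝ) (π₁ : Θ → S → ℝ) (π₂ : S → A → ℝ)
    (hN : NashEq lam u₁ u₂ π₁ π₂) (s : S) :
    Jt u₁ u₂ π₁ π₂ s ⊆ Θtypes u₁ s := by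
  rintro θ ⟨a, _, ha⟩
  refine ⟨fun s' a' => if s' = s then (if a' = a then 1 else 0) else π₂ s' a', ?_, ?_⟩
  · intro s'
    by_cases h : s' = s
    · subst h
      constructor
      · intro a'; by_cases h : a' = a <;> simp [h]
      · simp
    · simp only [if_neg h]
      exact hN.2.1 s'
  · intro s'
    by_cases h : s' = s
    · subst h; rfl
    · have h1 : u1R u₁ (fun s' a' => if s' = s then (if a' = a then 1 else 0) else π₂ s' a')
          θ s' = u1R u₁ π₂ θ s' := by
        unfold u1R; simp [h]
      have h2 : u1R u₁ (fun s' a' => if s' = s then (if a' = a then 1 else 0) else π₂ s' a')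
          θ s = u₁ θ s a := by
        unfold u1R; simp
      rw [h1, h2]
      exact le_trans (eqPayoff_ge lam u₁ u₂ π₁ π₂ hN θ s') ha

/-- at a Nash equilibrium, `J̃(s,π*) ⊆ Θ_s` for every signal `s`; consequently,
whenever `J̃(s,π*)` is nonempty, `P̃(s,π*) ⊆ P̂(s)`. -/
theorem Jt_subset_Θtypes_and_Pt_subset_Ph [Nonempty Θ] [Nonempty A]
    (hS : 1 < Fintype.card S)
    (lam : Θ → ℝ) (hpos : ∀ θ, 0 < lam θ) (hsum : ∑ θ, lam θ = 1)
    (u₁ u₂ : Θ → S → A → ℝ) (π₁ : Θ → S → ℝ) (π₂ : S → A → ℝ)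
    (hN : NashEq lam u₁ u₂ π₁ π₂) :
    ∀ s : S, Jt u₁ u₂ π₁ π₂ s ⊆ Θtypes u₁ s ∧
      ((Jt u₁ u₂ π₁ π₂ s).Nonempty →
        Pt lam u₁ u₂ π₁ π₂ s ⊆ Ph lam u₁ u₂ s) := by
  intro s
  have hJ := Jt_subset_Θtypes lam u₁ u₂ π₁ π₂ hN s
  refine ⟨hJ, fun hne => ?_⟩
  rw [Pt, if_pos hne]
  rintro p ⟨⟨hpd, hps⟩, hodds⟩
  exact ⟨⟨hpd, fun θ hθ => hps θ (fun h => hθ (hJ h))⟩, hodds⟩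

end
end

section
/- Let π* be a Nash equilibrium whose receiver strategy lies in Π₂•, let s be an on-path signal, and suppose θ' ≿_s θ''. Then: if π₁*(s|θ'') > 0 then π₁*(s|θ') = 1; in particular π₁*(s|θ'') ≤ π₁*(s|θ'), and the Bayesian posterior p(θ|s) := λ(θ)π₁*(s|θ) / ∑_{θ̂} λ(θ̂)π₁*(s|θ̂) satisfies p(θ''|s)·λ(θ') ≤ λ(θ'')·p(θ'|s), i.e. p(·|s) ∈ P_{θ'▷θ''}. -/
open scoped Classical
open Finset Filter

noncomputable section

variable {Θ S A : Type*} [Fintype Θ] [Fintype S] [Fintype A]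

/-- at a Nash equilibrium with rational receiver strategy, on-path signals
respect the rational compatibility order, and the Bayesian posterior lies in `P_{θ'▷θ''}`. -/
theorem onpath_posterior_compatible [Nonempty Θ] [Nonempty A] (hS : 1 < Fintype.card S)
    (lam : Θ → ℝ) (hpos : ∀ θ, 0 < lam θ) (hsum : ∑ θ, lam θ = 1)
    (u₁ u₂ : Θ → S → A → ℝ) (π₁ : Θ → S → ℝ) (π₂ : S → A → ℝ)
    (hN : NashEq lam u₁ u₂ π₁ π₂) (hR : Rational2 u₂ π₂)
    (s : S) (hon : ∃ θ, π₁ θ s ≠ 0)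
    (θ' θ'' : Θ) (hc : MoreCompat u₁ u₂ s θ' θ'') :
    (π₁ θ'' s ≠ 0 → π₁ θ' s = 1) ∧
    π₁ θ'' s ≤ π₁ θ' s ∧
    (lam θ'' * π₁ θ'' s / ∑ t, lam t * π₁ t s) * lam θ'
      ≤ lam θ'' * (lam θ' * π₁ θ' s / ∑ t, lam t * π₁ t s) := by
  obtain ⟨hD1, hD2, hGB, _⟩ := hN
  -- key implication
  have key : π₁ θ'' s ≠ 0 → π₁ θ' s = 1 := by
    intro h''
    have hWB : WeakBest u₁ π₂ θ'' s := by
      intro s' _; exact hGB θ'' s h'' s'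
    have hSB : StrictBest u₁ π₂ θ' s := hc π₂ hR hWB
    -- π₁ θ' vanishes off s
    have hzero : ∀ s', s' ≠ s → π₁ θ' s' = 0 := by
      intro s' hne
      by_contra h
      have := hGB θ' s' h s
      exact absurd this (not_le.mpr (hSB s' hne))
    have hsum1 := (hD1 θ').2
    calc π₁ θ' s = ∑ t, π₁ θ' t := by
          rw [Finset.sum_eq_single s]
          · intro t _ ht; exact hzero t ht
          · intro h; exact absurd (Finset.mem_univ s) h
      _ = 1 := hsum1
  refine ⟨key, ?_, ?_⟩
  · -- π₁ θ'' s ≤ π₁ θ' s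
    by_cases h'' : π₁ θ'' s = 0
    · rw [h'']; exact (hD1 θ').1 s
    · rw [key h'']
      calc π₁ θ'' s ≤ ∑ t, π₁ θ'' t :=
            Finset.single_le_sum (fun t _ => (hD1 θ'').1 t) (Finset.mem_univ s)
        _ = 1 := (hD1 θ'').2
  · -- posterior inequality
    have hle : π₁ θ'' s ≤ π₁ θ' s := by
      by_cases h'' : π₁ θ'' s = 0
      · rw [h'']; exact (hD1 θ').1 s
      · rw [key h'']
        calc π₁ θ'' s ≤ ∑ t, π₁ θ'' t :=
              Finset.single_le_sum (fun t _ => (hD1 θ'').1 t) (Finset.mem_univ s)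
          _ = 1 := (hD1 θ'').2
    obtain ⟨θ₀, hθ₀⟩ := hon
    have hZ : 0 < ∑ t, lam t * π₁ t s := by
      apply Finset.sum_pos' (fun t _ => mul_nonneg (hpos t).le ((hD1 t).1 s))
      exact ⟨θ₀, Finset.mem_univ θ₀,
        mul_pos (hpos θ₀) (lt_of_le_of_ne ((hD1 θ₀).1 s) (Ne.symm hθ₀))⟩
    rw [div_mul_eq_mul_div, mul_div_assoc']
    have h : lam θ'' * π₁ θ'' s * lam θ' ≤ lam θ'' * (lam θ' * π₁ θ' s) := by
      nlinarith [mul_nonneg (mul_pos (hpos θ'') (hpos θ')).le (sub_nonneg.mpr hle)]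
    exact (div_le_div_iff_of_pos_right hZ).mpr h

end
end

section
/- For ξ > 0 define P̂_ξ(s) := Δ(Θ_s) ∩ ⋂_{(θ',θ'') : θ'≿_s θ''} {p ∈ Δ(Θ) : p(θ'')·λ(θ') ≤ (1+ξ)·λ(θ'')·p(θ')}. Then there exists ξ > 0 such that for every signal s, BR(P̂_ξ(s), s) = BR(P̂(s), s). -/
open scoped Classical
open Finset Filter

noncomputable section

variable {Θ S A : Type*} [Fintype Θ] [Fintype S] [Fintype A]

/-- The `ξ`-relaxation `P̂_ξ(s)` of the uniformly rationality-compatible beliefs `P̂(s)`. -/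
def PhXi (lam : Θ → ℝ) (u₁ u₂ : Θ → S → A → ℝ) (ξ : ℝ) (s : S) : Set (Θ → ℝ) :=
  DeltaOn (Θtypes u₁ s) ∩
    {p | ∀ θ' θ'', MoreCompat u₁ u₂ s θ' θ'' →
      p θ'' * lam θ' ≤ (1 + ξ) * (lam θ'' * p θ')}

open scoped Topology

lemma isCompact_dist : IsCompact {p : Θ → ℝ | IsDist p} := by
  have hclosed : IsClosed {p : Θ → ℝ | IsDist p} := by
    have h1 : {p : Θ → ℝ | IsDist p}
        = (⋂ x, {p : Θ → ℝ | 0 ≤ p x}) ∩ {p : Θ → ℝ | ∑ x, p x = 1} := by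
      ext p; simp [IsDist, Set.mem_iInter]
    rw [h1]
    exact IsClosed.inter
      (isClosed_iInter fun x => isClosed_le continuous_const (continuous_apply x))
      (isClosed_eq (continuous_finset_sum _ fun x _ => continuous_apply x) continuous_const)
  refine (isCompact_univ_pi fun _ : Θ =>
    isCompact_Icc (a := (0:ℝ)) (b := 1)).of_isClosed_subset hclosed ?_
  rintro p ⟨hnn, hsum⟩ x _
  refine ⟨hnn x, ?_⟩
  calc p x ≤ ∑ y, p y := Finset.single_le_sum (fun y _ => hnn y) (Finset.mem_univ x)
    _ = 1 := hsum

lemma tendsto_expU2 (u₂ : Θ → S → A → ℝ) (s : S) (b : A) {q : Θ → ℝ}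
    {p : ℕ → Θ → ℝ} (h : ∀ θ, Tendsto (fun n => p n θ) atTop (𝓝 (q θ))) :
    Tendsto (fun n => expU2 u₂ (p n) s b) atTop (𝓝 (expU2 u₂ q s b)) := by
  unfold expU2
  exact tendsto_finset_sum _ fun θ _ => (h θ).mul tendsto_const_nhds

lemma limit_mem (lam : Θ → ℝ) (u₁ u₂ : Θ → S → A → ℝ) (s : S) (a : A)
    (h : ∀ n : ℕ, ∃ p ∈ PhXi lam u₁ u₂ (1 / ((n : ℝ) + 1)) s, a ∈ BRb u₂ p s) :
    ∃ p ∈ Ph lam u₁ u₂ s, a ∈ BRb u₂ p s := by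
  choose p hp hbr using h
  have hK : ∀ n, p n ∈ {q : Θ → ℝ | IsDist q} := fun n => (hp n).1.1
  obtain ⟨q, hqK, φ, hφ, hlim⟩ := isCompact_dist.tendsto_subseq hK
  have heval : ∀ θ, Tendsto (fun n => p (φ n) θ) atTop (𝓝 (q θ)) := fun θ =>
    ((continuous_apply θ).tendsto q).comp hlim
  have hξ : Tendsto (fun n => 1 / ((φ n : ℝ) + 1)) atTop (𝓝 0) :=
    tendsto_one_div_add_atTop_nhds_zero_nat.comp hφ.tendsto_atTop
  refine ⟨q, ⟨⟨hqK, ?_⟩, ?_⟩, ?_⟩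
  · intro θ hθ
    have hzero : (fun n => p (φ n) θ) = fun _ => (0 : ℝ) :=
      funext fun n => (hp (φ n)).1.2 θ hθ
    exact tendsto_nhds_unique (heval θ) (by rw [hzero]; exact tendsto_const_nhds)
  · intro θ' θ'' hc
    have h1 : Tendsto (fun n => p (φ n) θ'' * lam θ') atTop (𝓝 (q θ'' * lam θ')) :=
      (heval θ'').mul tendsto_const_nhds
    have h2 : Tendsto (fun n => (1 + 1 / ((φ n : ℝ) + 1)) * (lam θ'' * p (φ n) θ'))
        atTop (𝓝 (lam θ'' * q θ')) := by
      have := ((tendsto_const_nhds :  Tendsto (fun _ : ℕ => (1:ℝ)) atTop (𝓝 1)).add hξ).mul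
        ((tendsto_const_nhds : Tendsto (fun _ : ℕ => lam θ'') atTop (𝓝 (lam θ''))).mul (heval θ'))
      simpa using this
    exact le_of_tendsto_of_tendsto' h1 h2 fun n => (hp (φ n)).2 θ' θ'' hc
  · intro a'
    exact le_of_tendsto_of_tendsto' (tendsto_expU2 u₂ s a' heval)
      (tendsto_expU2 u₂ s a heval) fun n => hbr (φ n) a'

lemma PhXi_mono (lam : Θ → ℝ) (hpos : ∀ θ, 0 < lam θ) (u₁ u₂ : Θ → S → A → ℝ)
    {ξ ξ' : ℝ} (h : ξ ≤ ξ') (s : S) :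
    PhXi lam u₁ u₂ ξ s ⊆ PhXi lam u₁ u₂ ξ' s := by
  rintro p ⟨hd, hodds⟩
  refine ⟨hd, fun θ' θ'' hc => le_trans (hodds θ' θ'' hc) ?_⟩
  have h0 : 0 ≤ lam θ'' * p θ' := mul_nonneg (hpos θ'').le (hd.1.1 θ')
  exact mul_le_mul_of_nonneg_right (by linarith) h0

lemma Ph_subset_PhXi (lam : Θ → ℝ) (hpos : ∀ θ, 0 < lam θ) (u₁ u₂ : Θ → S → A → ℝ)
    {ξ : ℝ} (h : 0 ≤ ξ) (s : S) :
    Ph lam u₁ u₂ s ⊆ PhXi lam u₁ u₂ ξ s := by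
  rintro p ⟨hd, hodds⟩
  refine ⟨hd, fun θ' θ'' hc => le_trans (hodds θ' θ'' hc) ?_⟩
  have h0 : 0 ≤ lam θ'' * p θ' := mul_nonneg (hpos θ'').le (hd.1.1 θ')
  nlinarith

/-- there exists `ξ > 0` such that for every signal `s`,
`BR(P̂_ξ(s), s) = BR(P̂(s), s)`. -/
theorem exists_xi_BR_PhXi_eq_BR_Ph [Nonempty Θ] [Nonempty A] (hS : 1 < Fintype.card S)
    (lam : Θ → ℝ) (hpos : ∀ θ, 0 < lam θ) (hsum : ∑ θ, lam θ = 1)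
    (u₁ u₂ : Θ → S → A → ℝ) :
    ∃ ξ : ℝ, 0 < ξ ∧ ∀ s : S,
      {a | ∃ p ∈ PhXi lam u₁ u₂ ξ s, a ∈ BRb u₂ p s}
        = {a | ∃ p ∈ Ph lam u₁ u₂ s, a ∈ BRb u₂ p s} := by
  have hchoice : ∀ sa : S × A, ∃ ξ0 : ℝ, 0 < ξ0 ∧
      ((¬ ∃ p ∈ Ph lam u₁ u₂ sa.1, sa.2 ∈ BRb u₂ p sa.1) →
        ∀ ξ ≤ ξ0, ¬ ∃ p ∈ PhXi lam u₁ u₂ ξ sa.1, sa.2 ∈ BRb u₂ p sa.1) := by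
    rintro ⟨s, a⟩
    by_cases hno : ∃ p ∈ Ph lam u₁ u₂ s, a ∈ BRb u₂ p s
    · exact ⟨1, one_pos, fun h => absurd hno h⟩
    · have h1 := mt (limit_mem lam u₁ u₂ s a) hno
      push_neg at h1
      obtain ⟨n, hn⟩ := h1
      refine ⟨1 / ((n : ℝ) + 1), by positivity, fun _ ξ hξ hex => ?_⟩
      obtain ⟨p, hp, hbr⟩ := hex
      exact hn p (PhXi_mono lam hpos u₁ u₂ hξ s hp) hbr
  choose f hfpos hf using hchoice
  have hSne : Nonempty S := Fintype.card_pos_iff.mp (by omega)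
  have hne : (Finset.univ : Finset (S × A)).Nonempty := Finset.univ_nonempty
  refine ⟨Finset.univ.inf' hne f, ?_, ?_⟩
  · exact (Finset.lt_inf'_iff hne).mpr fun sa _ => hfpos sa
  · intro s
    ext a
    constructor
    · rintro ⟨p, hp, hbr⟩
      by_contra hno
      exact hf (s, a) hno _ (Finset.inf'_le f (Finset.mem_univ (s, a))) ⟨p, hp, hbr⟩
    · rintro ⟨p, hp, hbr⟩
      refine ⟨p, Ph_subset_PhXi lam hpos u₁ u₂ ?_ s hp, hbr⟩
      exact le_of_lt ((Finset.lt_inf'_iff hne).mpr fun sa _ => hfpos sa)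

end
end
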